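/- arXiv:2007.02786 — 2 statements merged into one kernel-verified Lean document; each statement's English description precedes it below -/
import Mathlib

section
/- Let P be an n×n row-stochastic real matrix (with n ≥ 1), let γ ∈ [0,1) and λ ∈ [0,1], and set H_λ = (I - γλP)⁻¹(I - γP) and H̄_λ = diag(H_λ). Then ρ(I - H̄_λ⁻¹ H_λ) ≤ ρ(I - H_λ) < 1. -/
open Matrix

/-- Spectral radius of a real square matrix: the maximum of `|μ|` over all complex
eigenvalues `μ` of the matrix (elements of the spectrum of its complexification). -/
noncomputable def specRad {n : ℕ} (A : Matrix (Fin n) (Fin n) ℝ) : ℝ :=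
  sSup {x : ℝ | ∃ μ ∈ spectrum ℂ (A.map (Complex.ofReal ·)), x = ‖μ‖}

open scoped NNReal

section Aux
attribute [local instance] Matrix.linftyOpNormedAddCommGroup Matrix.linftyOpNormedRing Matrix.linftyOpNormedAlgebra

variable {n : ℕ}

lemma aux_entry_le_norm (A : Matrix (Fin n) (Fin n) ℝ) (i j : Fin n) : |A i j| ≤ ‖A‖ := by
  have h0 : ‖A i j‖₊ ≤ ∑ j', ‖A i j'‖₊ :=
    Finset.single_le_sum (f := fun j' => ‖A i j'‖₊) (fun _ _ => zero_le) (Finset.mem_univ j)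
  have h1 : (∑ j', ‖A i j'‖₊) ≤ (Finset.univ.sup fun i => ∑ j, ‖A i j‖₊) :=
    Finset.le_sup (f := fun i => ∑ j, ‖A i j‖₊) (Finset.mem_univ i)
  rw [Matrix.linfty_opNorm_def, ← Real.norm_eq_abs]
  exact_mod_cast h0.trans h1

lemma aux_norm_le (A : Matrix (Fin n) (Fin n) ℝ) {r : ℝ} (hr : 0 ≤ r)
    (h : ∀ i, ∑ j, |A i j| ≤ r) : ‖A‖ ≤ r := by
  lift r to ℝ≥0 using hr
  rw [Matrix.linfty_opNorm_def, NNReal.coe_le_coe]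
  refine Finset.sup_le fun i _ => ?_
  have := h i
  rw [← NNReal.coe_le_coe, NNReal.coe_sum]
  simpa [← Real.norm_eq_abs] using this

lemma aux_map_norm (A : Matrix (Fin n) (Fin n) ℝ) :
    ‖A.map (Complex.ofReal ·)‖ = ‖A‖ := by
  rw [Matrix.linfty_opNorm_def, Matrix.linfty_opNorm_def]
  congr 1
  refine Finset.sup_congr rfl fun i _ => Finset.sum_congr rfl fun j _ => ?_
  simp [Matrix.map_apply, Complex.nnnorm_real]

lemma aux_spec_abs_le (hn : 1 ≤ n) (A : Matrix (Fin n) (Fin n) ℝ) {μ : ℂ}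
    (hμ : μ ∈ spectrum ℂ (A.map (Complex.ofReal ·))) : ‖μ‖ ≤ ‖A‖ := by
  have : Nonempty (Fin n) := ⟨⟨0, hn⟩⟩
  have := spectrum.norm_le_norm_of_mem hμ
  rwa [aux_map_norm] at this

lemma aux_bddAbove (hn : 1 ≤ n) (A : Matrix (Fin n) (Fin n) ℝ) :
    BddAbove {x : ℝ | ∃ μ ∈ spectrum ℂ (A.map (Complex.ofReal ·)), x = ‖μ‖} := by
  refine ⟨‖A‖, fun x hx => ?_⟩
  obtain ⟨μ, hμ, rfl⟩ := hx
  exact aux_spec_abs_le hn A hμ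

lemma aux_specRad_le (hn : 1 ≤ n) (A : Matrix (Fin n) (Fin n) ℝ) {r : ℝ} (hr : 0 ≤ r)
    (h : ∀ i, ∑ j, |A i j| ≤ r) : specRad A ≤ r := by
  refine Real.sSup_le (fun x hx => ?_) hr
  obtain ⟨μ, hμ, rfl⟩ := hx
  exact (aux_spec_abs_le hn A hμ).trans (aux_norm_le A hr h)

lemma aux_le_specRad (hn : 1 ≤ n) (A : Matrix (Fin n) (Fin n) ℝ) {c : ℝ} (hc : 0 ≤ c)
    (h : ∀ i, ∑ j, A i j = c) : c ≤ specRad A := by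
  refine le_csSup (aux_bddAbove hn A) ?_
  refine ⟨(c : ℂ), ?_, by simp [Complex.norm_real, abs_of_nonneg hc]⟩
  rw [spectrum.mem_iff]
  intro hUnit
  rw [Matrix.isUnit_iff_isUnit_det, isUnit_iff_ne_zero] at hUnit
  apply hUnit
  rw [← Matrix.exists_mulVec_eq_zero_iff]
  refine ⟨(fun _ => 1), ?_, ?_⟩
  · intro h0; have := congrFun h0 ⟨0, hn⟩; simp at this
  · funext i
    have hsum : ∑ j, (A i j : ℂ) = (c : ℂ) := by
      rw [← Complex.ofReal_sum, h i]
    simp only [Matrix.mulVec, dotProduct, mul_one, Matrix.sub_apply,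
      Matrix.map_apply, Matrix.algebraMap_matrix_apply, Pi.zero_apply,
      Finset.sum_sub_distrib, hsum]
    rw [Finset.sum_ite_eq Finset.univ i (fun _ => (algebraMap ℂ ℂ) (c:ℂ))]
    simp

lemma aux_hasSum_entry {f : ℕ → Matrix (Fin n) (Fin n) ℝ} {S : Matrix (Fin n) (Fin n) ℝ}
    (h : HasSum f S) (i j : Fin n) : HasSum (fun k => f k i j) (S i j) := by
  have hb : ∀ A : Matrix (Fin n) (Fin n) ℝ, ‖(fun A : Matrix (Fin n) (Fin n) ℝ => A i j) A‖ ≤ 1 * ‖A‖ := by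
    intro A; rw [one_mul, Real.norm_eq_abs]; exact aux_entry_le_norm A i j
  let L : Matrix (Fin n) (Fin n) ℝ →L[ℝ] ℝ :=
    LinearMap.mkContinuous
      { toFun := fun A => A i j
        map_add' := fun A B => rfl
        map_smul' := fun c A => rfl } 1 hb
  exact L.hasSum h

lemma aux_pow_nonneg {Q : Matrix (Fin n) (Fin n) ℝ} (hQ : ∀ i j, 0 ≤ Q i j) (k : ℕ) :
    ∀ i j, 0 ≤ (Q ^ k) i j := by
  induction k with
  | zero => intro i j; simp [Matrix.one_apply]; positivity
  | succ m ih =>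
    intro i j
    rw [pow_succ, Matrix.mul_apply]
    exact Finset.sum_nonneg fun k _ => mul_nonneg (ih i k) (hQ k j)

lemma aux_inv_nonneg {Q : Matrix (Fin n) (Fin n) ℝ} (hQ : ∀ i j, 0 ≤ Q i j)
    (hnorm : ‖Q‖ < 1) : ∀ i j, 0 ≤ (1 - Q)⁻¹ i j := by
  intro i j
  have hs : HasSum (fun k => Q ^ k) ((1 - Q)⁻¹) := by
    rw [Matrix.nonsing_inv_eq_ringInverse]
    exact hasSum_geom_series_inverse Q hnorm
  have := aux_hasSum_entry hs i j
  exact hasSum_le (fun k => aux_pow_nonneg hQ k i j) hasSum_zero this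

/-- For a row-stochastic `P`, `γ ∈ [0,1)`, `λ ∈ [0,1]`,
`H_λ = (I - γλP)⁻¹(I - γP)`, `H̄_λ = diag(H_λ)`:
`ρ(I - H̄_λ⁻¹H_λ) ≤ ρ(I - H_λ) < 1`. -/
theorem stmt_16 {n : ℕ} (hn : 1 ≤ n) (P : Matrix (Fin n) (Fin n) ℝ)
    (hP0 : ∀ i j, 0 ≤ P i j) (hP1 : ∀ i, ∑ j, P i j = 1)
    (γ : ℝ) (hγ0 : 0 ≤ γ) (hγ1 : γ < 1)
    (lam : ℝ) (hl0 : 0 ≤ lam) (hl1 : lam ≤ 1)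
    (Hlam Hlambar : Matrix (Fin n) (Fin n) ℝ)
    (hH : Hlam = (1 - (γ * lam) • P)⁻¹ * (1 - γ • P))
    (hB : Hlambar = Matrix.diagonal (fun i => Hlam i i)) :
    specRad (1 - Hlambar⁻¹ * Hlam) ≤ specRad (1 - Hlam) ∧ specRad (1 - Hlam) < 1 := by
  have hne : Nonempty (Fin n) := ⟨⟨0, hn⟩⟩
  set a : ℝ := γ * lam with ha_def
  have ha0 : 0 ≤ a := mul_nonneg hγ0 hl0
  have haγ : a ≤ γ := by nlinarith
  have ha1 : a < 1 := lt_of_le_of_lt haγ hγ1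
  have h1a : 0 < 1 - a := by linarith
  set Q : Matrix (Fin n) (Fin n) ℝ := a • P with hQdef
  have hQ0 : ∀ i j, 0 ≤ Q i j := by
    intro i j
    have : Q i j = a * P i j := rfl
    rw [this]
    exact mul_nonneg ha0 (hP0 i j)
  have hQrow : ∀ i, ∑ j, |Q i j| = a := by
    intro i
    have : ∀ j, |Q i j| = a * P i j := by
      intro j
      rw [abs_of_nonneg (hQ0 i j)]; rfl
    simp_rw [this, ← Finset.mul_sum, hP1 i, mul_one]
  have hQnorm : ‖Q‖ < 1 :=
    lt_of_le_of_lt (aux_norm_le Q ha0 fun i => le_of_eq (hQrow i)) ha1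
  have hUnit : IsUnit (1 - Q) := isUnit_one_sub_of_norm_lt_one hQnorm
  have hdet : IsUnit (1 - Q).det := (Matrix.isUnit_iff_isUnit_det _).mp hUnit
  have hInv0 : ∀ i j, 0 ≤ (1 - Q)⁻¹ i j := aux_inv_nonneg hQ0 hQnorm
  -- row sums of the inverse
  have hInvRow : ∀ i, ∑ k, (1 - Q)⁻¹ i k = (1 - a)⁻¹ := by
    have hOneVec : (1 - Q) *ᵥ (fun _ => (1 : ℝ)) = fun _ => (1 - a) := by
      funext i
      simp only [Matrix.sub_mulVec, Matrix.mulVec, dotProduct, mul_one, Pi.sub_apply]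
      have h1 : ∑ j, (1 : Matrix (Fin n) (Fin n) ℝ) i j = 1 := by
        simp [Matrix.one_apply]
      have h2 : ∑ j, Q i j = a := by
        have : ∀ j, Q i j = a * P i j := fun j => rfl
        simp_rw [this, ← Finset.mul_sum, hP1 i, mul_one]
      simp only [Matrix.sub_apply, Finset.sum_sub_distrib, h1, h2]
    intro i
    have key : (1 - Q)⁻¹ *ᵥ ((1 - Q) *ᵥ (fun _ => (1 : ℝ))) = fun _ => (1 : ℝ) := by
      rw [Matrix.mulVec_mulVec, Matrix.nonsing_inv_mul _ hdet, Matrix.one_mulVec]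
    rw [hOneVec] at key
    have key2 := congrFun key i
    simp only [Matrix.mulVec, dotProduct] at key2
    have : (∑ k, (1 - Q)⁻¹ i k) * (1 - a) = 1 := by
      rw [Finset.sum_mul]
      exact key2
    field_simp at this ⊢
    linarith [this]
  have hγl : 0 ≤ γ * (1 - lam) := mul_nonneg hγ0 (by linarith)
  set c : ℝ := γ * (1 - lam) * (1 - a)⁻¹ with hc_def
  have hc0 : 0 ≤ c := mul_nonneg hγl (le_of_lt (inv_pos.mpr h1a))
  have hc1 : c < 1 := by
    have hlt : γ * (1 - lam) < 1 - a := by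
      have : γ * (1 - lam) = γ - a := by rw [ha_def]; ring
      linarith [this]
    calc c = γ * (1 - lam) * (1 - a)⁻¹ := rfl
      _ < (1 - a) * (1 - a)⁻¹ := by
          exact mul_lt_mul_of_pos_right hlt (inv_pos.mpr h1a)
      _ = 1 := mul_inv_cancel₀ (ne_of_gt h1a)
  set N : Matrix (Fin n) (Fin n) ℝ := 1 - Hlam with hNdef
  have hNfor : N = (γ * (1 - lam)) • ((1 - Q)⁻¹ * P) := by
    rw [hNdef, hH]
    have h1 : (1 - Q)⁻¹ * (1 - Q) = 1 := Matrix.nonsing_inv_mul _ hdet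
    calc (1 : Matrix (Fin n) (Fin n) ℝ) - (1 - Q)⁻¹ * (1 - γ • P)
        = (1 - Q)⁻¹ * (1 - Q) - (1 - Q)⁻¹ * (1 - γ • P) := by rw [h1]
      _ = (1 - Q)⁻¹ * ((1 - Q) - (1 - γ • P)) := (Matrix.mul_sub _ _ _).symm
      _ = (1 - Q)⁻¹ * ((γ - a) • P) := by
          rw [sub_sub_sub_cancel_left, hQdef, ← sub_smul]
      _ = (γ * (1 - lam)) • ((1 - Q)⁻¹ * P) := by
          rw [Matrix.mul_smul, show γ - a = γ * (1 - lam) by rw [ha_def]; ring]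
  have hNentry : ∀ i j, N i j = γ * (1 - lam) * ∑ k, (1 - Q)⁻¹ i k * P k j := by
    intro i j
    rw [hNfor]
    simp [Matrix.smul_apply, Matrix.mul_apply, smul_eq_mul]
  have hN0 : ∀ i j, 0 ≤ N i j := by
    intro i j
    rw [hNentry]
    exact mul_nonneg hγl (Finset.sum_nonneg fun k _ => mul_nonneg (hInv0 i k) (hP0 k j))
  have hNrow : ∀ i, ∑ j, N i j = c := by
    intro i
    simp_rw [hNentry, ← Finset.mul_sum]
    rw [Finset.sum_comm]
    have : ∀ k, ∑ j, (1 - Q)⁻¹ i k * P k j = (1 - Q)⁻¹ i k := by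
      intro k
      rw [← Finset.mul_sum, hP1 k, mul_one]
    simp_rw [this, hInvRow i]
    exact hc_def.symm
  have hcleN : c ≤ specRad N := aux_le_specRad hn N hc0 hNrow
  have hNleC : specRad N ≤ c := by
    refine aux_specRad_le hn N hc0 fun i => ?_
    rw [← hNrow i]
    refine le_of_eq (Finset.sum_congr rfl fun j _ => abs_of_nonneg (hN0 i j))
  constructor
  · -- specRad M ≤ specRad N
    have hNii : ∀ i, N i i = 1 - Hlam i i := by
      intro i; rw [hNdef]; simp [Matrix.sub_apply, Matrix.one_apply]
    have hNoff : ∀ i j, i ≠ j → N i j = -Hlam i j := by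
      intro i j hij; rw [hNdef]; simp [Matrix.sub_apply, Matrix.one_apply_ne hij]
    have hNii_le : ∀ i, N i i ≤ c := by
      intro i
      rw [← hNrow i]
      exact Finset.single_le_sum (fun j _ => hN0 i j) (Finset.mem_univ i)
    have hd_pos : ∀ i, 0 < Hlam i i := by
      intro i
      have := hNii_le i
      have h := hNii i
      nlinarith [hc1]
    have hd_le1 : ∀ i, Hlam i i ≤ 1 := by
      intro i
      have := hN0 i i
      have h := hNii i
      linarith
    have hBinv : Hlambar⁻¹ = Matrix.diagonal (fun i => (Hlam i i)⁻¹) := by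
      rw [hB]
      refine Matrix.inv_eq_right_inv ?_
      rw [Matrix.diagonal_mul_diagonal]
      have : ∀ i, Hlam i i * (Hlam i i)⁻¹ = 1 := fun i =>
        mul_inv_cancel₀ (ne_of_gt (hd_pos i))
      simp only [this]
      exact Matrix.diagonal_one
    have hMentry : ∀ i j, (1 - Hlambar⁻¹ * Hlam) i j
        = (1 : Matrix (Fin n) (Fin n) ℝ) i j - (Hlam i i)⁻¹ * Hlam i j := by
      intro i j
      rw [hBinv]
      simp [Matrix.sub_apply, Matrix.diagonal_mul]
    refine le_trans (aux_specRad_le hn _ hc0 fun i => ?_) hcleN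
    -- row sum of abs of M row i
    have hMii : |(1 - Hlambar⁻¹ * Hlam) i i| = 0 := by
      rw [hMentry, Matrix.one_apply_eq, inv_mul_cancel₀ (ne_of_gt (hd_pos i))]
      simp
    have hMoff : ∀ j, j ≠ i → |(1 - Hlambar⁻¹ * Hlam) i j| = (Hlam i i)⁻¹ * N i j := by
      intro j hj
      rw [hMentry, Matrix.one_apply_ne (Ne.symm hj), hNoff i j (Ne.symm hj)]
      rw [abs_of_nonneg]
      · ring
      · have : (0:ℝ) - (Hlam i i)⁻¹ * Hlam i j = (Hlam i i)⁻¹ * N i j := by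
          rw [hNoff i j (Ne.symm hj)]; ring
        rw [this]
        exact mul_nonneg (le_of_lt (inv_pos.mpr (hd_pos i))) (hN0 i j)
    rw [← Finset.add_sum_erase _ _ (Finset.mem_univ i), hMii, zero_add]
    have : ∑ j ∈ Finset.univ.erase i, |(1 - Hlambar⁻¹ * Hlam) i j|
        = (Hlam i i)⁻¹ * (c - N i i) := by
      rw [Finset.sum_congr rfl fun j hj => hMoff j (Finset.ne_of_mem_erase hj)]
      rw [← Finset.mul_sum]
      congr 1
      have := Finset.add_sum_erase Finset.univ (fun j => N i j) (Finset.mem_univ i)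
      rw [hNrow i] at this
      linarith
    rw [this]
    rw [inv_mul_le_iff₀ (hd_pos i)]
    have h1 := hNii i
    have h2 := hN0 i i
    nlinarith [hd_le1 i]
  · exact lt_of_le_of_lt hNleC hc1

end Aux
end

section
/- Let P be an n×n row-stochastic real matrix (with n ≥ 1), let γ ∈ [0,1) and λ ∈ [0,1], and set H_λ = (I - γλP)⁻¹(I - γP) and H̄_λ = diag(H_λ). If H_λ is symmetric, then κ(H̄_λ⁻¹ H_λ) ≤ 2 κ(H_λ), where κ denotes the ratio of the largest to the smallest eigenvalue. -/
open Matrix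

/-- The largest real eigenvalue of a real square matrix (supremum of the real points
of the spectrum of its complexification). -/
noncomputable def maxEig {n : ℕ} (A : Matrix (Fin n) (Fin n) ℝ) : ℝ :=
  sSup {x : ℝ | (x : ℂ) ∈ spectrum ℂ (A.map (Complex.ofReal ·))}

/-- The smallest real eigenvalue of a real square matrix (infimum of the real points
of the spectrum of its complexification). -/
noncomputable def minEig {n : ℕ} (A : Matrix (Fin n) (Fin n) ℝ) : ℝ :=
  sInf {x : ℝ | (x : ℂ) ∈ spectrum ℂ (A.map (Complex.ofReal ·))}

open Pointwise

lemma aux_real_spectrum {n : ℕ} (A : Matrix (Fin n) (Fin n) ℝ) :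
    {x : ℝ | (x : ℂ) ∈ spectrum ℂ (A.map (Complex.ofReal ·))} = spectrum ℝ A := by
  ext x
  simp only [Set.mem_setOf_eq, spectrum.mem_iff, not_iff_not,
    Matrix.isUnit_iff_isUnit_det, isUnit_iff_ne_zero, ne_eq, not_iff_not]
  have h1 : algebraMap ℂ (Matrix (Fin n) (Fin n) ℂ) (x:ℂ) - A.map (Complex.ofReal ·)
      = Complex.ofRealHom.mapMatrix (algebraMap ℝ (Matrix (Fin n) (Fin n) ℝ) x - A) := by
    ext i j
    simp [Matrix.map_apply, Matrix.sub_apply, Matrix.algebraMap_matrix_apply, apply_ite]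
  rw [h1, ← RingHom.map_det]
  simp


lemma aux_eigenvector {n : ℕ} {A : Matrix (Fin n) (Fin n) ℝ} {μ : ℝ}
    (h : μ ∈ spectrum ℝ A) : ∃ v : Fin n → ℝ, v ≠ 0 ∧ A *ᵥ v = μ • v := by
  rw [← AlgEquiv.spectrum_eq Matrix.toLinAlgEquiv' A,
    ← Module.End.hasEigenvalue_iff_mem_spectrum] at h
  obtain ⟨v, hv⟩ := h.exists_hasEigenvector
  refine ⟨v, hv.2, ?_⟩
  have := hv.apply_eq_smul
  simpa [Matrix.toLinAlgEquiv'_apply] using this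

lemma aux_cross {n : ℕ} {A : Matrix (Fin n) (Fin n) ℝ} (hA : A.IsSymm) (x : Fin n → ℝ) :
    |x ⬝ᵥ A *ᵥ x - ∑ i, A i i * (x i * x i)|
      ≤ ∑ i, (∑ j, if i = j then 0 else |A i j|) * (x i * x i) := by
  have hsym : ∀ i j, A j i = A i j := hA.apply
  set c : Fin n → Fin n → ℝ := fun i j => if i = j then 0 else |A i j| with hc
  have hcsym : ∀ i j, c j i = c i j := by
    intro i j
    by_cases h : i = j
    · subst h; rfl
    · have h' : ¬ j = i := fun e => h e.symm
      simp only [hc, if_neg h, if_neg h', hsym i j]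
  have expand : x ⬝ᵥ A *ᵥ x = (∑ i, ∑ j, if i = j then 0 else A i j * (x i * x j))
      + ∑ i, A i i * (x i * x i) := by
    simp only [dotProduct, mulVec, Finset.mul_sum]
    rw [← Finset.sum_add_distrib]
    refine Finset.sum_congr rfl fun i _ => ?_
    have per : ∀ j, x i * (A i j * x j) =
        (if i = j then 0 else A i j * (x i * x j)) + (if i = j then A i i * (x i * x i) else 0) := by
      intro j
      split_ifs with h
      · subst h; ring
      · ring
    simp only [per, Finset.sum_add_distrib, Finset.sum_ite_eq, Finset.mem_univ, if_true]
  rw [expand, add_sub_cancel_right]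
  calc |∑ i, ∑ j, if i = j then 0 else A i j * (x i * x j)|
      ≤ ∑ i, |∑ j, if i = j then 0 else A i j * (x i * x j)| := Finset.abs_sum_le_sum_abs _ _
    _ ≤ ∑ i, ∑ j, |if i = j then 0 else A i j * (x i * x j)| :=
        Finset.sum_le_sum fun i _ => Finset.abs_sum_le_sum_abs _ _
    _ ≤ ∑ i, ∑ j, c i j * ((x i * x i + x j * x j) / 2) := by
        refine Finset.sum_le_sum fun i _ => Finset.sum_le_sum fun j _ => ?_
        simp only [hc]
        split_ifs with h
        · simp
        · rw [abs_mul]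
          have h1 : |x i * x j| ≤ (x i * x i + x j * x j) / 2 := by
            rw [abs_mul]
            nlinarith [sq_nonneg (|x i| - |x j|), sq_abs (x i), sq_abs (x j), abs_nonneg (x i),
              abs_nonneg (x j)]
          exact mul_le_mul_of_nonneg_left h1 (abs_nonneg _)
    _ = ∑ i, ∑ j, c i j * (x i * x i) := by
        have h2 : ∀ i j, c i j * ((x i * x i + x j * x j) / 2)
            = c i j * (x i * x i) / 2 + c i j * (x j * x j) / 2 := fun i j => by ring
        simp only [h2, Finset.sum_add_distrib]
        have h3 : ∑ i, ∑ j, c i j * (x j * x j) / 2 = ∑ i, ∑ j, c i j * (x i * x i) / 2 := by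
          rw [Finset.sum_comm]
          refine Finset.sum_congr rfl fun i _ => Finset.sum_congr rfl fun j _ => ?_
          rw [hcsym i j]
        rw [h3, ← Finset.sum_add_distrib]
        refine Finset.sum_congr rfl fun i _ => ?_
        rw [← Finset.sum_add_distrib]
        refine Finset.sum_congr rfl fun j _ => by ring
    _ = ∑ i, (∑ j, if i = j then 0 else |A i j|) * (x i * x i) := by
        refine Finset.sum_congr rfl fun i _ => ?_
        rw [Finset.sum_mul]

lemma aux_quad {n : ℕ} {A : Matrix (Fin n) (Fin n) ℝ} (hA : A.IsSymm) {s : ℝ}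
    (hdom : ∀ i, (∑ j, if i = j then 0 else |A i j|) = A i i - s) (x : Fin n → ℝ) :
    s * (x ⬝ᵥ x) ≤ x ⬝ᵥ A *ᵥ x ∧
      x ⬝ᵥ A *ᵥ x ≤ 2 * (∑ i, A i i * (x i * x i)) - s * (x ⬝ᵥ x) := by
  have h := aux_cross hA x
  rw [abs_le] at h
  have h1 : ∑ i, (∑ j, if i = j then 0 else |A i j|) * (x i * x i)
      = (∑ i, A i i * (x i * x i)) - s * (x ⬝ᵥ x) := by
    simp only [hdom, sub_mul, dotProduct, Finset.sum_sub_distrib, Finset.mul_sum]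
  rw [h1] at h
  constructor <;> linarith [h.1, h.2]


lemma aux_herm {n : ℕ} {A : Matrix (Fin n) (Fin n) ℝ} (hA : A.IsSymm) : A.IsHermitian := by
  ext i j
  rw [Matrix.conjTranspose_apply, star_trivial]
  exact hA.apply i j

lemma aux_spec_quad {n : ℕ} (hn : 0 < n) {A : Matrix (Fin n) (Fin n) ℝ} (hA : A.IsSymm)
    (x : Fin n → ℝ) :
    sInf (spectrum ℝ A) * (x ⬝ᵥ x) ≤ x ⬝ᵥ A *ᵥ x ∧
      x ⬝ᵥ A *ᵥ x ≤ sSup (spectrum ℝ A) * (x ⬝ᵥ x) := by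
  haveI : NeZero n := ⟨hn.ne'⟩
  have hherm : A.IsHermitian := aux_herm hA
  have hfin : (spectrum ℝ A).Finite := A.finite_real_spectrum (𝕜 := ℝ)
  have hne : (spectrum ℝ A).Nonempty := by
    rw [hherm.spectrum_real_eq_range_eigenvalues]
    exact ⟨_, ⟨⟨0, hn⟩, rfl⟩⟩
  set m := sInf (spectrum ℝ A) with hm
  set M := sSup (spectrum ℝ A) with hM
  have hBspec : spectrum ℝ (algebraMap ℝ (Matrix (Fin n) (Fin n) ℝ) M - A) = {M} - spectrum ℝ A :=
    (spectrum.singleton_sub_eq A M).symm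
  have hB'spec : spectrum ℝ (A - algebraMap ℝ (Matrix (Fin n) (Fin n) ℝ) m)
      = spectrum ℝ A - {m} := (spectrum.sub_singleton_eq A m).symm
  have halg : algebraMap ℝ (Matrix (Fin n) (Fin n) ℝ) = fun c : ℝ => c • (1 : Matrix (Fin n) (Fin n) ℝ) := by
    funext c
    exact Algebra.algebraMap_eq_smul_one c
  have hsmul : ∀ c : ℝ, (c • (1 : Matrix (Fin n) (Fin n) ℝ)).IsSymm := by
    intro c
    rw [Matrix.IsSymm, Matrix.transpose_smul, Matrix.transpose_one]
  have hermM : (algebraMap ℝ (Matrix (Fin n) (Fin n) ℝ) M - A).IsHermitian := by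
    rw [halg]
    exact aux_herm (by rw [Matrix.IsSymm, Matrix.transpose_sub, (hsmul M).eq, hA.eq])
  have hermm : (A - algebraMap ℝ (Matrix (Fin n) (Fin n) ℝ) m).IsHermitian := by
    rw [halg]
    exact aux_herm (by rw [Matrix.IsSymm, Matrix.transpose_sub, (hsmul m).eq, hA.eq])
  have hpsdM : (algebraMap ℝ (Matrix (Fin n) (Fin n) ℝ) M - A).PosSemidef := by
    refine hermM.posSemidef_iff_eigenvalues_nonneg.mpr fun i => ?_
    have hmem := hermM.eigenvalues_mem_spectrum_real (𝕜 := ℝ) i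
    rw [hBspec] at hmem
    obtain ⟨a, ha, b, hb, hab⟩ := hmem
    simp only [Set.mem_singleton_iff] at ha
    subst ha
    have h3 := le_csSup (hfin.bddAbove) hb
    rw [← hab]
    simp only [Pi.zero_apply]
    linarith
  have hpsdm : (A - algebraMap ℝ (Matrix (Fin n) (Fin n) ℝ) m).PosSemidef := by
    refine hermm.posSemidef_iff_eigenvalues_nonneg.mpr fun i => ?_
    have hmem := hermm.eigenvalues_mem_spectrum_real (𝕜 := ℝ) i
    rw [hB'spec] at hmem
    obtain ⟨a, ha, b, hb, hab⟩ := hmem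
    simp only [Set.mem_singleton_iff] at hb
    subst hb
    have h3 := csInf_le (hfin.bddBelow) ha
    rw [← hab]
    simp only [Pi.zero_apply]
    linarith
  have hq : ∀ (B : Matrix (Fin n) (Fin n) ℝ), B.PosSemidef → 0 ≤ x ⬝ᵥ B *ᵥ x := by
    intro B hB
    have := hB.dotProduct_mulVec_nonneg x
    simpa [star_trivial] using this
  have h1 := hq _ hpsdM
  have h2 := hq _ hpsdm
  rw [halg] at h1 h2
  have e1 : x ⬝ᵥ (M • (1 : Matrix (Fin n) (Fin n) ℝ) - A) *ᵥ x = M * (x ⬝ᵥ x) - x ⬝ᵥ A *ᵥ x := by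
    rw [Matrix.sub_mulVec, dotProduct_sub, Matrix.smul_mulVec, Matrix.one_mulVec,
      dotProduct_smul, smul_eq_mul]
  have e2 : x ⬝ᵥ (A - m • (1 : Matrix (Fin n) (Fin n) ℝ)) *ᵥ x = x ⬝ᵥ A *ᵥ x - m * (x ⬝ᵥ x) := by
    rw [Matrix.sub_mulVec, dotProduct_sub, Matrix.smul_mulVec, Matrix.one_mulVec,
      dotProduct_smul, smul_eq_mul]
  rw [e1] at h1
  rw [e2] at h2
  constructor <;> linarith


section Neumann
attribute [local instance] Matrix.linftyOpNormedRing Matrix.linftyOpNormedAlgebra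

lemma aux_entry_bound {n : ℕ} (B : Matrix (Fin n) (Fin n) ℝ) (i j : Fin n) : ‖B i j‖ ≤ ‖B‖ := by
  rw [Matrix.linfty_opNorm_def]
  have h1 : ‖B i j‖₊ ≤ ∑ j', ‖B i j'‖₊ :=
    Finset.single_le_sum (f := fun j' => ‖B i j'‖₊) (fun _ _ => by positivity) (Finset.mem_univ j)
  have h2 : (∑ j', ‖B i j'‖₊) ≤ Finset.univ.sup fun i => ∑ j', ‖B i j'‖₊ :=
    Finset.le_sup (f := fun i => ∑ j', ‖B i j'‖₊) (Finset.mem_univ i)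
  exact_mod_cast h1.trans h2

lemma aux_rowsum_bound {n : ℕ} (B : Matrix (Fin n) (Fin n) ℝ) (i : Fin n) :
    ‖∑ j, B i j‖ ≤ ‖B‖ := by
  rw [Matrix.linfty_opNorm_def]
  have h1 : ‖∑ j, B i j‖₊ ≤ ∑ j', ‖B i j'‖₊ := nnnorm_sum_le _ _
  have h2 : (∑ j', ‖B i j'‖₊) ≤ Finset.univ.sup fun i => ∑ j', ‖B i j'‖₊ :=
    Finset.le_sup (f := fun i => ∑ j', ‖B i j'‖₊) (Finset.mem_univ i)
  exact_mod_cast h1.trans h2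

lemma aux_neumann {n : ℕ} (P : Matrix (Fin n) (Fin n) ℝ) (hP0 : ∀ i j, 0 ≤ P i j)
    (hP1 : ∀ i, ∑ j, P i j = 1) {t : ℝ} (ht0 : 0 ≤ t) (ht1 : t < 1) :
    ∃ M : Matrix (Fin n) (Fin n) ℝ,
      (1 - t • P) * M = 1 ∧ M * (1 - t • P) = 1 ∧ (∀ i j, 0 ≤ M i j) ∧
      ∀ i, ∑ j, M i j = (1 - t)⁻¹ := by
  haveI : CompleteSpace (Matrix (Fin n) (Fin n) ℝ) := FiniteDimensional.complete ℝ _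
  have hPnorm : ‖P‖ ≤ 1 := by
    rw [Matrix.linfty_opNorm_def]
    have : ∀ i : Fin n, (∑ j, ‖P i j‖₊) ≤ 1 := by
      intro i
      have : ((∑ j, ‖P i j‖₊ : NNReal) : ℝ) = 1 := by
        push_cast
        calc (∑ j, (‖P i j‖₊ : ℝ)) = ∑ j, P i j := by
              refine Finset.sum_congr rfl fun j _ => ?_
              rw [coe_nnnorm, Real.norm_eq_abs, abs_of_nonneg (hP0 i j)]
          _ = 1 := hP1 i
      exact le_of_eq (by exact_mod_cast this)
    exact_mod_cast Finset.sup_le fun i _ => this i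
  have hXnorm : ‖t • P‖ < 1 := by
    rw [norm_smul, Real.norm_eq_abs, abs_of_nonneg ht0]
    calc t * ‖P‖ ≤ t * 1 := by nlinarith [norm_nonneg P]
      _ < 1 := by linarith
  have hs : Summable (fun k => (t • P) ^ k) := summable_geometric_of_norm_lt_one hXnorm
  set M := ∑' k, (t • P) ^ k with hMdef
  have h1 : (1 - t • P) * M = 1 := mul_neg_geom_series _ hXnorm
  have h2 : M * (1 - t • P) = 1 := geom_series_mul_neg _ hXnorm
  -- entry evaluation CLM
  have powpos : ∀ (k : ℕ) i j, 0 ≤ ((t • P) ^ k) i j := by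
    intro k
    induction k with
    | zero => intro i j; by_cases h : i = j <;> simp [Matrix.one_apply, h]
    | succ k ih =>
        intro i j
        rw [pow_succ]
        rw [Matrix.mul_apply]
        refine Finset.sum_nonneg fun l _ => mul_nonneg (ih i l) ?_
        simpa using mul_nonneg ht0 (hP0 l j)
  have powrow : ∀ (k : ℕ) i, ∑ j, ((t • P) ^ k) i j = t ^ k := by
    intro k
    induction k with
    | zero => intro i; simp [Matrix.one_apply]
    | succ k ih =>
        intro i
        rw [pow_succ' (t • P) k]
        calc ∑ j, ((t • P) * (t • P) ^ k) i j
            = ∑ j, ∑ l, (t • P) i l * ((t • P) ^ k) l j := by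
              refine Finset.sum_congr rfl fun j _ => ?_
              rw [Matrix.mul_apply]
          _ = ∑ l, (t • P) i l * ∑ j, ((t • P) ^ k) l j := by
              rw [Finset.sum_comm]
              exact Finset.sum_congr rfl fun l _ => by rw [Finset.mul_sum]
          _ = t ^ (k + 1) := by
              simp only [ih, Matrix.smul_apply, smul_eq_mul]
              rw [← Finset.sum_mul, ← Finset.mul_sum, hP1 i, mul_one]
              exact (pow_succ' t k).symm
  refine ⟨M, h1, h2, ?_, ?_⟩
  · intro i j
    let evalCLM : Matrix (Fin n) (Fin n) ℝ →L[ℝ] ℝ :=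
      LinearMap.mkContinuous
        { toFun := fun B => B i j, map_add' := fun _ _ => rfl, map_smul' := fun _ _ => rfl } 1
        (fun B => by show ‖B i j‖ ≤ 1 * ‖B‖; simpa using aux_entry_bound B i j)
    have hMij : M i j = ∑' k, ((t • P) ^ k) i j := by
      have h3 := evalCLM.map_tsum hs
      exact h3
    rw [hMij]
    exact tsum_nonneg fun k => powpos k i j
  · intro i
    let rowCLM : Matrix (Fin n) (Fin n) ℝ →L[ℝ] ℝ :=
      LinearMap.mkContinuous
        { toFun := fun B => ∑ j, B i j,
          map_add' := fun B C => by simp [Finset.sum_add_distrib],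
          map_smul' := fun c B => by simp [Finset.mul_sum] } 1
        (fun B => by simpa using aux_rowsum_bound B i)
    have hMrow : ∑ j, M i j = ∑' k, ∑ j, ((t • P) ^ k) i j := by
      have h3 := rowCLM.map_tsum hs
      exact h3
    rw [hMrow]
    simp only [powrow]
    exact tsum_geometric_of_lt_one ht0 ht1

end Neumann



/-- For a row-stochastic `P`, `γ ∈ [0,1)`, `λ ∈ [0,1]`,
`H_λ = (I - γλP)⁻¹(I - γP)`, `H̄_λ = diag(H_λ)`: if `H_λ` is symmetric, then
`κ(H̄_λ⁻¹H_λ) ≤ 2 κ(H_λ)`. -/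
theorem stmt_17 {n : ℕ} (hn : 1 ≤ n) (P : Matrix (Fin n) (Fin n) ℝ)
    (hP0 : ∀ i j, 0 ≤ P i j) (hP1 : ∀ i, ∑ j, P i j = 1)
    (γ : ℝ) (hγ0 : 0 ≤ γ) (hγ1 : γ < 1)
    (lam : ℝ) (hl0 : 0 ≤ lam) (hl1 : lam ≤ 1)
    (Hlam Hlambar : Matrix (Fin n) (Fin n) ℝ)
    (hH : Hlam = (1 - (γ * lam) • P)⁻¹ * (1 - γ • P))
    (hB : Hlambar = Matrix.diagonal (fun i => Hlam i i))
    (hsymm : Hlam.IsSymm) :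
    maxEig (Hlambar⁻¹ * Hlam) / minEig (Hlambar⁻¹ * Hlam) ≤
      2 * (maxEig Hlam / minEig Hlam) := by
  have hn0 : 0 < n := hn
  -- Neumann series facts
  have ht0 : 0 ≤ γ * lam := mul_nonneg hγ0 hl0
  have ht1 : γ * lam < 1 := lt_of_le_of_lt (by nlinarith) hγ1
  obtain ⟨M, h1, h2, hMpos, hMrow⟩ := aux_neumann P hP0 hP1 ht0 ht1
  have hHM : Hlam = M * (1 - γ • P) := by rw [hH, Matrix.inv_eq_right_inv h1]
  set s : ℝ := (1 - γ * lam)⁻¹ * (1 - γ) with hsdef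
  have hs : 0 < s := mul_pos (inv_pos.mpr (by linarith)) (by linarith)
  -- row sums of Hlam
  have hrow : ∀ i, ∑ j, Hlam i j = s := by
    intro i
    rw [hHM]
    calc ∑ j, (M * (1 - γ • P)) i j
        = ∑ j, ∑ k, M i k * ((1 : Matrix (Fin n) (Fin n) ℝ) - γ • P) k j := by
          exact Finset.sum_congr rfl fun j _ => Matrix.mul_apply
      _ = ∑ k, M i k * ∑ j, ((1 : Matrix (Fin n) (Fin n) ℝ) - γ • P) k j := by
          rw [Finset.sum_comm]
          exact Finset.sum_congr rfl fun k _ => (Finset.mul_sum _ _ _).symm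
      _ = ∑ k, M i k * (1 - γ) := by
          refine Finset.sum_congr rfl fun k _ => ?_
          congr 1
          simp only [Matrix.sub_apply, Matrix.smul_apply, smul_eq_mul, Finset.sum_sub_distrib,
            ← Finset.mul_sum, hP1 k]
          simp [Matrix.one_apply, Finset.sum_ite_eq]
      _ = s := by rw [← Finset.sum_mul, hMrow i, hsdef]
  -- off-diagonal sign
  have hkey : Hlam = 1 - (γ - γ * lam) • (M * P) := by
    have e1 : (1 : Matrix (Fin n) (Fin n) ℝ) - γ • P
        = (1 - (γ * lam) • P) - (γ - γ * lam) • P := by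
      rw [sub_smul]
      abel
    rw [hHM, e1, Matrix.mul_sub, h2, Matrix.mul_smul]
  have hc0 : 0 ≤ γ - γ * lam := by nlinarith
  have hMP : ∀ i j, 0 ≤ (M * P) i j := by
    intro i j
    rw [Matrix.mul_apply]
    exact Finset.sum_nonneg fun k _ => mul_nonneg (hMpos i k) (hP0 k j)
  have hoff : ∀ i j, i ≠ j → Hlam i j ≤ 0 := by
    intro i j hij
    rw [hkey]
    simp only [Matrix.sub_apply, Matrix.smul_apply, Matrix.one_apply, if_neg hij, smul_eq_mul]
    have := mul_nonneg hc0 (hMP i j)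
    linarith
  -- diagonal dominance
  have hdom : ∀ i, (∑ j, if i = j then 0 else |Hlam i j|) = Hlam i i - s := by
    intro i
    have e1 : ∀ j, (if i = j then 0 else |Hlam i j|)
        = (if i = j then Hlam i j else 0) - Hlam i j := by
      intro j
      by_cases h : i = j
      · simp [h]
      · rw [if_neg h, if_neg h, abs_of_nonpos (hoff i j h)]
        ring
    simp only [e1, Finset.sum_sub_distrib, Finset.sum_ite_eq, Finset.mem_univ, if_true, hrow i]
  have hcross_nonneg : ∀ i, 0 ≤ ∑ j, if i = j then 0 else |Hlam i j| := by
    intro i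
    refine Finset.sum_nonneg fun j _ => ?_
    split_ifs
    · exact le_rfl
    · exact abs_nonneg _
  have hquadH := fun x => aux_quad hsymm hdom x
  -- spectrum facts for Hlam
  have hherm := aux_herm hsymm
  have hfinH : (spectrum ℝ Hlam).Finite := Hlam.finite_real_spectrum (𝕜 := ℝ)
  have hneH : (spectrum ℝ Hlam).Nonempty := by
    rw [hherm.spectrum_real_eq_range_eigenvalues]
    exact ⟨_, ⟨⟨0, hn0⟩, rfl⟩⟩
  set m := sInf (spectrum ℝ Hlam) with hm
  set Ms := sSup (spectrum ℝ Hlam) with hMs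
  have hdot_pos : ∀ v : Fin n → ℝ, v ≠ 0 → 0 < v ⬝ᵥ v := by
    intro v hv
    obtain ⟨i, hi⟩ := Function.ne_iff.mp hv
    refine Finset.sum_pos' (fun j _ => mul_self_nonneg _) ⟨i, Finset.mem_univ i, ?_⟩
    exact mul_self_pos.mpr hi
  have hspec_lb : ∀ μ ∈ spectrum ℝ Hlam, s ≤ μ := by
    intro μ hμ
    obtain ⟨v, hv0, hv⟩ := aux_eigenvector hμ
    have hvv := hdot_pos v hv0
    have hq := (hquadH v).1
    rw [hv, dotProduct_smul, smul_eq_mul] at hq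
    nlinarith
  have hmlb : s ≤ m := le_csInf hneH hspec_lb
  have hmM : m ≤ Ms := csInf_le_csSup hneH hfinH.bddBelow hfinH.bddAbove
  have hm0 : 0 < m := lt_of_lt_of_le hs hmlb
  have hM0 : 0 < Ms := lt_of_lt_of_le hm0 hmM
  have hdiag_le : ∀ i, Hlam i i ≤ Ms := by
    intro i
    have hq := (aux_spec_quad hn0 hsymm (Pi.single i 1)).2
    have e1 : (Pi.single i 1 : Fin n → ℝ) ⬝ᵥ Hlam *ᵥ (Pi.single i 1) = Hlam i i := by
      simp [dotProduct, mulVec, Pi.single_apply, Finset.mul_sum]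
    have e2 : (Pi.single i 1 : Fin n → ℝ) ⬝ᵥ (Pi.single i 1) = 1 := by
      simp [dotProduct, Pi.single_apply]
    rw [e1, e2, mul_one] at hq
    exact hq
  have hdiagpos : ∀ i, 0 < Hlam i i := fun i => by
    have hh1 := hdom i
    have hh2 := hcross_nonneg i
    linarith
  -- diagonal scaling
  set d : Fin n → ℝ := fun i => (Real.sqrt (Hlam i i))⁻¹ with hd
  have hsqrtpos : ∀ i, 0 < Real.sqrt (Hlam i i) := fun i => Real.sqrt_pos.mpr (hdiagpos i)
  have hdpos : ∀ i, 0 < d i := fun i => inv_pos.mpr (hsqrtpos i)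
  have hddinv : ∀ i, d i * d i = (Hlam i i)⁻¹ := by
    intro i
    show (Real.sqrt (Hlam i i))⁻¹ * (Real.sqrt (Hlam i i))⁻¹ = (Hlam i i)⁻¹
    rw [← mul_inv, Real.mul_self_sqrt (hdiagpos i).le]
  have hdd : ∀ i, Hlam i i * (d i * d i) = 1 := by
    intro i
    rw [hddinv i]
    exact mul_inv_cancel₀ (hdiagpos i).ne'
  set E := Matrix.diagonal d with hE
  set F := Matrix.diagonal (fun i => Real.sqrt (Hlam i i)) with hF
  have hEF : E * F = 1 := by
    rw [hE, hF, Matrix.diagonal_mul_diagonal]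
    have e3 : (fun i => d i * Real.sqrt (Hlam i i)) = fun _ => (1 : ℝ) := by
      funext i
      exact inv_mul_cancel₀ (hsqrtpos i).ne'
    rw [e3, Matrix.diagonal_one]
  have hFE : F * E = 1 := by
    rw [hE, hF, Matrix.diagonal_mul_diagonal]
    have e3 : (fun i => Real.sqrt (Hlam i i) * d i) = fun _ => (1 : ℝ) := by
      funext i
      exact mul_inv_cancel₀ (hsqrtpos i).ne'
    rw [e3, Matrix.diagonal_one]
  set u : (Matrix (Fin n) (Fin n) ℝ)ˣ := ⟨E, F, hEF, hFE⟩ with hu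
  set C := E * Hlam * E with hCdef
  have hsim : Hlambar⁻¹ * Hlam = u.val * C * (u⁻¹).val := by
    show Hlambar⁻¹ * Hlam = E * C * F
    have hBinv : Hlambar⁻¹ = Matrix.diagonal (fun i => (Hlam i i)⁻¹) := by
      rw [hB]
      refine Matrix.inv_eq_right_inv ?_
      rw [Matrix.diagonal_mul_diagonal]
      have e3 : (fun i => Hlam i i * (Hlam i i)⁻¹) = fun _ => (1 : ℝ) := by
        funext i
        exact mul_inv_cancel₀ (hdiagpos i).ne'
      rw [e3, Matrix.diagonal_one]
    have e4 : E * C * F = (E * E) * Hlam * (E * F) := by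
      rw [hCdef]
      simp only [Matrix.mul_assoc]
    have e5 : E * E = Matrix.diagonal (fun i => (Hlam i i)⁻¹) := by
      rw [hE, Matrix.diagonal_mul_diagonal]
      exact congrArg Matrix.diagonal (funext fun i => hddinv i)
    rw [e4, hEF, Matrix.mul_one, e5, hBinv]
  have hspecC : spectrum ℝ (Hlambar⁻¹ * Hlam) = spectrum ℝ C := by
    rw [hsim]
    exact spectrum.units_conjugate
  have hCsymm : C.IsSymm := by
    refine Matrix.IsSymm.ext fun i j => ?_
    rw [hCdef, hE]
    simp only [Matrix.mul_diagonal, Matrix.diagonal_mul]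
    rw [hsymm.apply i j]
    ring
  -- bounds on spectrum of C
  have hCbound : ∀ μ ∈ spectrum ℝ C, m / Ms ≤ μ ∧ μ ≤ 2 := by
    intro μ hμ
    obtain ⟨v, hv0, hv⟩ := aux_eigenvector hμ
    have hvv := hdot_pos v hv0
    set y : Fin n → ℝ := fun i => d i * v i with hy
    have hy0 : y ≠ 0 := by
      intro hcon
      apply hv0
      funext i
      have h5 : d i * v i = 0 := congrFun hcon i
      rcases mul_eq_zero.mp h5 with h | h
      · exact absurd h (hdpos i).ne'
      · exact h
    have hyy := hdot_pos y hy0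
    have hCv : v ⬝ᵥ C *ᵥ v = μ * (v ⬝ᵥ v) := by rw [hv, dotProduct_smul, smul_eq_mul]
    have hCq : v ⬝ᵥ C *ᵥ v = y ⬝ᵥ Hlam *ᵥ y := by
      rw [hCdef, hE]
      simp only [dotProduct, mulVec, Matrix.mul_diagonal, Matrix.diagonal_mul, Finset.mul_sum]
      refine Finset.sum_congr rfl fun i _ => Finset.sum_congr rfl fun j _ => ?_
      show v i * (d i * Hlam i j * d j * v j) = d i * v i * (Hlam i j * (d j * v j))
      ring
    have hvy : v ⬝ᵥ v = ∑ i, Hlam i i * (y i * y i) := by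
      simp only [dotProduct]
      refine Finset.sum_congr rfl fun i _ => ?_
      show v i * v i = Hlam i i * ((d i * v i) * (d i * v i))
      linear_combination (v i * v i) * (hdd i).symm
    have hyHy : μ * (v ⬝ᵥ v) = y ⬝ᵥ Hlam *ᵥ y := by rw [← hCv, hCq]
    have hq2 := (hquadH y).2
    have hq1 := (aux_spec_quad hn0 hsymm y).1
    rw [← hm] at hq1
    have hvvle : v ⬝ᵥ v ≤ Ms * (y ⬝ᵥ y) := by
      rw [hvy]
      have e6 : y ⬝ᵥ y = ∑ i, y i * y i := rfl
      rw [e6, Finset.mul_sum]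
      exact Finset.sum_le_sum fun i _ =>
        mul_le_mul_of_nonneg_right (hdiag_le i) (mul_self_nonneg _)
    have hμpos : 0 < μ := by nlinarith
    constructor
    · rw [div_le_iff₀ hM0]
      nlinarith
    · rw [← hvy] at hq2
      nlinarith
  -- conclude
  have hfinC : (spectrum ℝ C).Finite := C.finite_real_spectrum (𝕜 := ℝ)
  have hneC : (spectrum ℝ C).Nonempty := by
    rw [(aux_herm hCsymm).spectrum_real_eq_range_eigenvalues]
    exact ⟨_, ⟨⟨0, hn0⟩, rfl⟩⟩
  have haS : sSup (spectrum ℝ C) ∈ spectrum ℝ C := hneC.csSup_mem hfinC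
  have hbS : sInf (spectrum ℝ C) ∈ spectrum ℝ C := hneC.csInf_mem hfinC
  unfold maxEig minEig
  rw [aux_real_spectrum, aux_real_spectrum, hspecC, ← hm, ← hMs]
  calc sSup (spectrum ℝ C) / sInf (spectrum ℝ C)
      ≤ 2 / (m / Ms) :=
        div_le_div₀ (by norm_num) (hCbound _ haS).2 (div_pos hm0 hM0) (hCbound _ hbS).1
    _ = 2 * (Ms / m) := by
        rw [div_div_eq_mul_div, mul_div_assoc]
end
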